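/- For all integers m ≥ 1, r ≥ 0, and n ≥ 1: S_{2m-1}^{(r+1)}(n) = (1/2) · S_{2m-1}^{(r)}(n) + (1/(2m)) · Σ_{k=1}^{m} C(2m, 2k) · B_{2m−2k} · S_{2k}^{(r)}(n), where B_j denotes the Bernoulli numbers. -/

import Mathlib

open Finset

lemma split_even_odd (f : ℕ → ℚ) (m : ℕ) :
    ∑ i ∈ range (2 * m), f i
      = (∑ j ∈ range m, f (2 * j)) + ∑ j ∈ range m, f (2 * j + 1) := by
  induction m with
  | zero => simp
  | succ m ih =>
    have h : 2 * (m + 1) = 2 * m + 1 + 1 := by ring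
    rw [h, sum_range_succ, sum_range_succ, sum_range_succ (fun j => f (2 * j)),
      sum_range_succ (fun j => f (2 * j + 1)), ih]
    ring

lemma faulhaber_base (m n : ℕ) (hm : 1 ≤ m) :
    (∑ i ∈ Finset.Icc 1 n, (i : ℚ) ^ (2 * m - 1))
      = (1 / 2) * (n : ℚ) ^ (2 * m - 1)
        + (1 / (2 * (m : ℚ))) * ∑ k ∈ Finset.Icc 1 m,
            ((2 * m).choose (2 * k) : ℚ) * bernoulli (2 * m - 2 * k) * (n : ℚ) ^ (2 * k) := by
  have hp : 2 * m - 1 + 1 = 2 * m := by omega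
  have h0 : Finset.Icc 1 n = Finset.Ico 1 (n + 1) := by rw [Nat.Icc_eq_range', Nat.Ico_eq_range']
  rw [h0, sum_Ico_pow, hp]
  rw [split_even_odd]
  have hd : ((2 * m - 1 : ℕ) : ℚ) + 1 = ((2 * m : ℕ) : ℚ) := by norm_cast
  simp only [hd]
  have hmQ : (m : ℚ) ≠ 0 := Nat.cast_ne_zero.mpr (by omega)
  -- odd part
  obtain ⟨m', rfl⟩ : ∃ m', m = m' + 1 := ⟨m - 1, by omega⟩
  have hodd : (∑ j ∈ range (m' + 1),
      bernoulli' (2 * j + 1) * ((2 * (m' + 1)).choose (2 * j + 1)) * (n : ℚ) ^ (2 * (m' + 1) - (2 * j + 1)) / ((2 * (m' + 1) : ℕ) : ℚ))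
      = (1 / 2) * (n : ℚ) ^ (2 * (m' + 1) - 1) := by
    rw [sum_range_succ']
    have hz : ∀ j ∈ range m',
        bernoulli' (2 * (j + 1) + 1) * ((2 * (m' + 1)).choose (2 * (j + 1) + 1)) * (n : ℚ) ^ (2 * (m' + 1) - (2 * (j + 1) + 1)) / ((2 * (m' + 1) : ℕ) : ℚ) = 0 := by
      intro j _
      rw [bernoulli'_eq_zero_of_odd ⟨j + 1, by ring⟩ (by omega)]
      simp
    rw [sum_congr rfl hz]
    simp only [sum_const_zero, zero_add, mul_zero, Nat.mul_zero, zero_add]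
    rw [bernoulli'_one, Nat.choose_one_right]
    have : ((2 * (m' + 1) : ℕ) : ℚ) ≠ 0 := by positivity
    field_simp
  rw [hodd]
  -- even part
  have heven : (∑ j ∈ range (m' + 1),
      bernoulli' (2 * j) * ((2 * (m' + 1)).choose (2 * j)) * (n : ℚ) ^ (2 * (m' + 1) - 2 * j) / ((2 * (m' + 1) : ℕ) : ℚ))
      = (1 / (2 * ((m' + 1 : ℕ) : ℚ))) * ∑ k ∈ Finset.Icc 1 (m' + 1),
            ((2 * (m' + 1)).choose (2 * k) : ℚ) * bernoulli (2 * (m' + 1) - 2 * k) * (n : ℚ) ^ (2 * k) := by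
    rw [mul_sum]
    refine sum_nbij' (fun j => m' + 1 - j) (fun k => m' + 1 - k) ?_ ?_ ?_ ?_ ?_
    · intro j hj; simp only [mem_range] at hj; simp only [mem_Icc]; omega
    · intro k hk; simp only [mem_Icc] at hk; simp only [mem_range]; omega
    · intro j hj; simp only [mem_range] at hj
      show m' + 1 - (m' + 1 - j) = j; omega
    · intro k hk; simp only [mem_Icc] at hk
      show m' + 1 - (m' + 1 - k) = k; omega
    · intro j hj
      simp only [mem_range] at hj
      have h1 : 2 * (m' + 1 - j) = 2 * (m' + 1) - 2 * j := by omega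
      rw [h1]
      have h2 : 2 * (m' + 1) - (2 * (m' + 1) - 2 * j) = 2 * j := by omega
      rw [h2, Nat.choose_symm (by omega : 2 * j ≤ 2 * (m' + 1)),
        bernoulli_eq_bernoulli'_of_ne_one (by omega)]
      have : ((2 * (m' + 1) : ℕ) : ℚ) ≠ 0 := by positivity
      push_cast
      field_simp
  rw [heven]
  ring


/-- Hyper-sum of powers of integers: `S m 0 n = n^m` and
`S m (r+1) n = ∑ i in [1..n], S m r i`. -/
def S (m : ℕ) : ℕ → ℕ → ℚ
  | 0, n => (n : ℚ) ^ m
  | r + 1, n => ∑ i ∈ Finset.Icc 1 n, S m r i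

theorem stmt_15 (m r n : ℕ) (hm : 1 ≤ m) (hn : 1 ≤ n) :
    S (2 * m - 1) (r + 1) n
      = (1 / 2) * S (2 * m - 1) r n
        + (1 / (2 * (m : ℚ))) * ∑ k ∈ Finset.Icc 1 m,
            ((2 * m).choose (2 * k) : ℚ) * bernoulli (2 * m - 2 * k) * S (2 * k) r n := by
  induction r generalizing n with
  | zero =>
    simp only [S]
    exact faulhaber_base m n hm
  | succ r ih =>
    show (∑ i ∈ Finset.Icc 1 n, S (2 * m - 1) (r + 1) i) = _
    have h1 : ∀ i ∈ Finset.Icc 1 n, S (2 * m - 1) (r + 1) i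
        = (1 / 2) * S (2 * m - 1) r i
          + (1 / (2 * (m : ℚ))) * ∑ k ∈ Finset.Icc 1 m,
              ((2 * m).choose (2 * k) : ℚ) * bernoulli (2 * m - 2 * k) * S (2 * k) r i := by
      intro i hi
      exact ih i (Finset.mem_Icc.mp hi).1
    rw [Finset.sum_congr rfl h1, Finset.sum_add_distrib, ← Finset.mul_sum, ← Finset.mul_sum,
      Finset.sum_comm]
    show _ = (1/2) * (∑ i ∈ Finset.Icc 1 n, S (2 * m - 1) r i) + _
    congr 2
    refine Finset.sum_congr rfl fun k _ => ?_
    rw [← Finset.mul_sum]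
    rfl
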